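/- For n ≥ 4, if a family of positive real numbers Y_i(u) (i = 1,…,n-2, u ∈ ℤ) satisfies the reduced SG Y-system 𝕐_n(RSG), then Y_i(u + 4n - 2) = Y_i(u) for all i and u. -/

import Mathlib

/-- two-step division recursion on ℕ -/
private noncomputable def hrAux (q : ℕ → ℝ) (s0 s1 : ℝ) : ℕ → ℝ
  | 0 => s0
  | 1 => s1
  | k+2 => q k / hrAux q s0 s1 k

private lemma hrAux_pos {q : ℕ → ℝ} {s0 s1 : ℝ} (hq : ∀ k, 0 < q k) (h0 : 0 < s0)
    (h1 : 0 < s1) : ∀ k, 0 < hrAux q s0 s1 k := by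
  intro k
  induction k using Nat.strong_induction_on with
  | _ k ih =>
    match k with
    | 0 => exact h0
    | 1 => exact h1
    | (k+2) => exact div_pos (hq k) (ih k (by omega))

private lemma hrAux_rel {q : ℕ → ℝ} {s0 s1 : ℝ} (h : ∀ k, hrAux q s0 s1 k ≠ 0) (k : ℕ) :
    hrAux q s0 s1 (k+2) * hrAux q s0 s1 k = q k := by
  show q k / hrAux q s0 s1 k * hrAux q s0 s1 k = q k
  exact div_mul_cancel₀ _ (h k)

private lemma exists_t (q : ℤ → ℝ) (hq : ∀ u, 0 < q u) :
    ∃ t : ℤ → ℝ, (∀ u, 0 < t u) ∧ ∀ u : ℤ, t (u-1) * t (u+1) = q u := by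
  classical
  set qf : ℕ → ℝ := fun k => q ((k:ℤ)+1) with hqf
  set qb : ℕ → ℝ := fun k => q (-(k:ℤ)-1) with hqb
  set t : ℤ → ℝ := fun u => if 0 ≤ u then hrAux qf 1 1 u.toNat else hrAux qb 1 (q 0) (-u).toNat
    with ht
  have hfpos : ∀ k, 0 < hrAux qf 1 1 k := hrAux_pos (fun k => hq _) one_pos one_pos
  have hbpos : ∀ k, 0 < hrAux qb 1 (q 0) k := hrAux_pos (fun k => hq _) one_pos (hq 0)
  have hneg : ∀ u : ℤ, u ≤ 0 → t u = hrAux qb 1 (q 0) (-u).toNat := by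
    intro u hu
    rcases eq_or_lt_of_le hu with h0 | h0
    · subst h0  -- wrong direction? h0 : u = 0
      rfl
    · simp only [ht]
      rw [if_neg (by omega)]
  have hposn : ∀ u : ℤ, 0 ≤ u → t u = hrAux qf 1 1 u.toNat := by
    intro u hu; simp only [ht]; rw [if_pos hu]
  refine ⟨t, ?_, ?_⟩
  · intro u
    by_cases h : 0 ≤ u
    · rw [hposn u h]; exact hfpos _
    · rw [hneg u (by omega)]; exact hbpos _
  · intro u
    rcases lt_trichotomy u 0 with hu | hu | hu
    · -- u < 0
      have h1 : t (u-1) = hrAux qb 1 (q 0) ((-u-1).toNat + 2) := by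
        rw [hneg (u-1) (by omega)]
        congr 1
        omega
      have h2 : t (u+1) = hrAux qb 1 (q 0) ((-u-1).toNat) := by
        rw [hneg (u+1) (by omega)]
        · congr 1; omega
      rw [h1, h2, hrAux_rel (fun k => ne_of_gt (hbpos k))]
      simp only [hqb]
      congr 1
      omega
    · subst hu
      have h1 : t (-1 : ℤ) = q 0 := by
        rw [hneg (-1) (by omega)]
        rfl
      have h2 : t (1 : ℤ) = 1 := by
        rw [hposn 1 (by omega)]
        rfl
      rw [show (0:ℤ)-1 = -1 by ring, show (0:ℤ)+1 = 1 by ring, h1, h2, mul_one]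
    · -- 0 < u
      have h1 : t (u-1) = hrAux qf 1 1 ((u-1).toNat) := hposn _ (by omega)
      have h2 : t (u+1) = hrAux qf 1 1 ((u-1).toNat + 2) := by
        rw [hposn (u+1) (by omega)]
        congr 1
        omega
      rw [h1, h2, mul_comm, hrAux_rel (fun k => ne_of_gt (hfpos k))]
      simp only [hqf]
      congr 1
      omega

/-- four-seed two-step recursion on ℕ for the SL2 sequences -/
private noncomputable def vrAux (a : ℕ → ℝ) (s0 s1 s2 s3 : ℝ) : ℕ → ℝ
  | 0 => s0
  | 1 => s1
  | 2 => s2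
  | 3 => s3
  | k+4 => a k * vrAux a s0 s1 s2 s3 (k+2) - vrAux a s0 s1 s2 s3 k

private lemma exists_V (a : ℤ → ℝ) (s0 s1 s2 s3 : ℝ) :
    ∃ x : ℤ → ℝ, x 0 = s0 ∧ x 1 = s1 ∧ x 2 = s2 ∧ x 3 = s3 ∧
      ∀ σ : ℤ, x (σ+2) = a σ * x σ - x (σ-2) := by
  classical
  set aF : ℕ → ℝ := fun k => a ((k:ℤ)+2) with haF
  set aB : ℕ → ℝ := fun k => a (-(k:ℤ)-2) with haB
  set b1 : ℝ := a 1 * s1 - s3 with hb1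
  set b2 : ℝ := a 0 * s0 - s2 with hb2
  set b3 : ℝ := a (-1) * b1 - s1 with hb3
  set x : ℤ → ℝ := fun σ => if 0 ≤ σ then vrAux aF s0 s1 s2 s3 σ.toNat
      else vrAux aB s0 b1 b2 b3 (-σ).toNat with hx
  have hposn : ∀ σ : ℤ, 0 ≤ σ → x σ = vrAux aF s0 s1 s2 s3 σ.toNat := by
    intro σ hσ; simp only [hx]; rw [if_pos hσ]
  have hneg : ∀ σ : ℤ, σ ≤ 0 → x σ = vrAux aB s0 b1 b2 b3 (-σ).toNat := by
    intro σ hσ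
    rcases eq_or_lt_of_le hσ with h0 | h0
    · subst h0; rfl
    · simp only [hx]; rw [if_neg (by omega)]
  refine ⟨x, by rw [hposn 0 le_rfl]; rfl, by rw [hposn 1 (by omega)]; rfl,
    by rw [hposn 2 (by omega)]; rfl, by rw [hposn 3 (by omega)]; rfl, ?_⟩
  intro σ
  rcases lt_trichotomy σ (-1) with hσ | hσ | hσ
  · -- σ ≤ -2 : backward recursion
    have h1 : x (σ+2) = vrAux aB s0 b1 b2 b3 ((-σ-2).toNat) := by
      rw [hneg (σ+2) (by omega)]; congr 1; omega
    have h2 : x σ = vrAux aB s0 b1 b2 b3 ((-σ-2).toNat + 2) := by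
      rw [hneg σ (by omega)]; congr 1; omega
    have h3 : x (σ-2) = vrAux aB s0 b1 b2 b3 ((-σ-2).toNat + 4) := by
      rw [hneg (σ-2) (by omega)]; congr 1; omega
    rw [h1, h2, h3]
    have hrec : vrAux aB s0 b1 b2 b3 ((-σ-2).toNat+4) =
        aB ((-σ-2).toNat) * vrAux aB s0 b1 b2 b3 ((-σ-2).toNat+2) -
          vrAux aB s0 b1 b2 b3 ((-σ-2).toNat) := rfl
    have haBk : aB ((-σ-2).toNat) = a σ := by
      simp only [haB]; congr 1; omega
    rw [hrec, haBk]
    ring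
  · subst hσ
    have h1 : x ((-1:ℤ)+2) = s1 := by rw [hposn _ (by omega)]; rfl
    have h2 : x (-1:ℤ) = b1 := by rw [hneg _ (by omega)]; rfl
    have h3 : x ((-1:ℤ)-2) = b3 := by rw [hneg _ (by omega)]; rfl
    rw [h1, h2, h3, hb3]
    ring
  · rcases lt_trichotomy σ 0 with h' | h' | h'
    · omega
    · subst h'
      have h1 : x ((0:ℤ)+2) = s2 := by rw [hposn _ (by omega)]; rfl
      have h2 : x (0:ℤ) = s0 := by rw [hposn _ (by omega)]; rfl
      have h3 : x ((0:ℤ)-2) = b2 := by rw [hneg _ (by omega)]; rfl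
      rw [h1, h2, h3, hb2]; ring
    · rcases eq_or_lt_of_le (by omega : (1:ℤ) ≤ σ) with h'' | h''
      · -- σ = 1
        rw [← h'']
        have h1 : x ((1:ℤ)+2) = s3 := by rw [hposn _ (by omega)]; rfl
        have h2 : x (1:ℤ) = s1 := by rw [hposn _ (by omega)]; rfl
        have h3 : x ((1:ℤ)-2) = b1 := by rw [hneg _ (by omega)]; rfl
        rw [h1, h2, h3, hb1]; ring
      · -- σ ≥ 2 : forward
        have h1 : x (σ+2) = vrAux aF s0 s1 s2 s3 ((σ-2).toNat + 4) := by
          rw [hposn (σ+2) (by omega)]; congr 1; omega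
        have h2 : x σ = vrAux aF s0 s1 s2 s3 ((σ-2).toNat + 2) := by
          rw [hposn σ (by omega)]; congr 1; omega
        have h3 : x (σ-2) = vrAux aF s0 s1 s2 s3 ((σ-2).toNat) :=
          hposn (σ-2) (by omega)
        rw [h1, h2, h3]
        have hrec : vrAux aF s0 s1 s2 s3 ((σ-2).toNat+4) =
            aF ((σ-2).toNat) * vrAux aF s0 s1 s2 s3 ((σ-2).toNat+2) -
              vrAux aF s0 s1 s2 s3 ((σ-2).toNat) := rfl
        have haFk : aF ((σ-2).toNat) = a σ := by
          simp only [haF]; congr 1; omega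
        rw [hrec, haFk]

private lemma tel_up_aux (f : ℤ → ℝ) (p : ℤ) (d : ℕ) :
    ∀ q : ℤ, q = p - 1 + d → (∀ j, p ≤ j → j ≤ q + 1 → f j ≠ 0) →
    (∏ j ∈ Finset.Icc p q, (f j / f (j+1))) = f p / f (q+1) := by
  induction d with
  | zero =>
    intro q hq hf
    rw [Finset.Icc_eq_empty (by omega), Finset.prod_empty,
      show q + 1 = p by omega, div_self (hf p le_rfl (by omega))]
  | succ d ih =>
    intro q hq hf
    have hins : Finset.Icc p q = insert q (Finset.Icc p (q-1)) := by
      ext x; simp only [Finset.mem_Icc, Finset.mem_insert]; omega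
    rw [hins, Finset.prod_insert (by simp only [Finset.mem_Icc]; omega),
      ih (q-1) (by omega) (fun j hj1 hj2 => hf j hj1 (by omega))]
    have hq1 : f q ≠ 0 := hf q (by omega) (by omega)
    rw [show q-1+1 = q by ring, div_mul_div_comm, mul_comm (f q) (f p),
      mul_div_mul_right _ _ hq1]

private lemma tel_up (f : ℤ → ℝ) (p q : ℤ) (hpq : p - 1 ≤ q)
    (hf : ∀ j, p ≤ j → j ≤ q + 1 → f j ≠ 0) :
    (∏ j ∈ Finset.Icc p q, (f j / f (j+1))) = f p / f (q+1) :=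
  tel_up_aux f p (q - (p-1)).toNat q (by omega) hf

private lemma tel_down_aux (f : ℤ → ℝ) (p : ℤ) (d : ℕ) :
    ∀ q : ℤ, q = p - 1 + d → (∀ j, p - 1 ≤ j → j ≤ q → f j ≠ 0) →
    (∏ j ∈ Finset.Icc p q, (f j / f (j-1))) = f q / f (p-1) := by
  induction d with
  | zero =>
    intro q hq hf
    rw [Finset.Icc_eq_empty (by omega), Finset.prod_empty,
      show q = p - 1 by omega, div_self (hf (p-1) le_rfl (by omega))]
  | succ d ih =>
    intro q hq hf
    have hins : Finset.Icc p q = insert q (Finset.Icc p (q-1)) := by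
      ext x; simp only [Finset.mem_Icc, Finset.mem_insert]; omega
    rw [hins, Finset.prod_insert (by simp only [Finset.mem_Icc]; omega),
      ih (q-1) (by omega) (fun j hj1 hj2 => hf j hj1 (by omega))]
    have hq1 : f (q-1) ≠ 0 := hf (q-1) (by omega) (by omega)
    rw [div_mul_div_comm, mul_comm (f (q-1)) (f (p-1)),
      mul_div_mul_right _ _ hq1]

private lemma tel_down (f : ℤ → ℝ) (p q : ℤ) (hpq : p - 1 ≤ q)
    (hf : ∀ j, p - 1 ≤ j → j ≤ q → f j ≠ 0) :
    (∏ j ∈ Finset.Icc p q, (f j / f (j-1))) = f q / f (p-1) :=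
  tel_down_aux f p (q - (p-1)).toNat q (by omega) hf

private lemma div4_rearrange (a b c e a' b' c' e' : ℝ) :
    (a*b)/(c*e) * ((a'*b')/(c'*e')) = ((a/e)*(b/c)) * ((a'/c')*(b'/e')) := by
  simp only [div_eq_mul_inv, mul_inv]
  ring

/-- Periodicity of the reduced sine-Gordon Y-system `𝕐_n(RSG)` (`n ≥ 4`):
if positive reals `Y_i(u)` (`i = 1,…,n-2`, `u ∈ ℤ`) satisfy `𝕐_n(RSG)`,
then `Y_i(u + 4n - 2) = Y_i(u)`. -/
theorem rsg_Y_system_periodicity (n : ℕ) (hn : 4 ≤ n) (Y : ℤ → ℤ → ℝ)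
    (hpos : ∀ i u : ℤ, 1 ≤ i → i ≤ (n : ℤ) - 2 → 0 < Y i u)
    (h1 : ∀ u : ℤ, Y 1 (u - ((n : ℤ) - 1)) * Y 1 (u + ((n : ℤ) - 1)) =
      (∏ j ∈ Finset.Icc (2 : ℤ) ((n : ℤ) - 2),
        (1 + Y j (u - (n : ℤ) + j)) * (1 + Y j (u + (n : ℤ) - j))) /
      (1 + (Y ((n : ℤ) - 2) u)⁻¹))
    (h2 : ∀ u : ℤ, Y 2 (u - 1) * Y 2 (u + 1) =
      if n = 4 then 1 + Y 1 u else (1 + Y 1 u) / (1 + (Y 3 u)⁻¹))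
    (h3 : ∀ i u : ℤ, 3 ≤ i → i ≤ (n : ℤ) - 3 → Y i (u - 1) * Y i (u + 1) =
      1 / ((1 + (Y (i - 1) u)⁻¹) * (1 + (Y (i + 1) u)⁻¹)))
    (h4 : ∀ u : ℤ, 5 ≤ n → Y ((n : ℤ) - 2) (u - 1) * Y ((n : ℤ) - 2) (u + 1) =
      1 / (1 + (Y ((n : ℤ) - 3) u)⁻¹)) :
    ∀ i u : ℤ, 1 ≤ i → i ≤ (n : ℤ) - 2 → Y i (u + (4 * (n : ℤ) - 2)) = Y i u := by
  classical
  set N : ℤ := (n : ℤ) with hN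
  have hN4 : 4 ≤ N := by omega
  -- the tau sequence on the bottom row
  obtain ⟨t, tpos, trel⟩ := exists_t (fun u => 1 + (Y (N-2) u)⁻¹)
    (fun u => by have := hpos (N-2) u (by omega) (by omega); positivity)
  -- the two SL2 component sequences
  obtain ⟨V1, hV10, hV11, hV12, hV13, hV1rel⟩ := exists_V t 1 1 0 0
  obtain ⟨V2, hV20, hV21, hV22, hV23, hV2rel⟩ := exists_V t 0 0 1 1
  set Dt : ℤ → ℤ → ℝ := fun σ τ => V1 σ * V2 τ - V1 τ * V2 σ with hDt
  have pluck : ∀ a b c d : ℤ,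
      Dt a b * Dt c d - Dt a c * Dt b d + Dt a d * Dt b c = 0 := by
    intro a b c d; simp only [hDt]; ring
  -- the row of ones
  have dstep : ∀ σ : ℤ, Dt σ (σ+2) = Dt (σ-2) σ := by
    intro σ; simp only [hDt, hV1rel σ, hV2rel σ]; ring
  have ones : ∀ σ : ℤ, Dt σ (σ+2) = 1 := by
    have base0 : Dt 0 2 = 1 := by simp [hDt, hV10, hV12, hV20, hV22]
    have base1 : Dt 1 3 = 1 := by simp [hDt, hV11, hV13, hV21, hV23]
    have fwd : ∀ k : ℕ, Dt (k:ℤ) ((k:ℤ)+2) = 1 := by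
      intro k
      induction k using Nat.strong_induction_on with
      | _ k ih =>
        match k with
        | 0 => exact base0
        | 1 => exact base1
        | (k+2) =>
          have hs := dstep ((k:ℤ)+2)
          rw [show ((k:ℤ)+2)-2 = (k:ℤ) by ring] at hs
          push_cast
          rw [hs]
          exact ih k (by omega)
    have bwd : ∀ k : ℕ, Dt (-(k:ℤ)) (-(k:ℤ)+2) = 1 := by
      intro k
      induction k using Nat.strong_induction_on with
      | _ k ih =>
        match k with
        | 0 =>
          rw [show -((0:ℕ):ℤ) = 0 by norm_num, show (0:ℤ)+2 = 2 by norm_num]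
          exact base0
        | 1 =>
          have hs := dstep 1
          rw [show (1:ℤ)-2 = -1 by ring, show (1:ℤ)+2 = 3 by ring] at hs
          rw [show -((1:ℕ):ℤ) = -1 by norm_num, show (-1:ℤ)+2 = 1 by norm_num, ← hs]
          exact base1
        | (k+2) =>
          have hs := dstep (-(k:ℤ))
          rw [show -(k:ℤ)-2 = -((k:ℤ)+2) by ring] at hs
          push_cast
          rw [show -((k:ℤ)+2)+2 = -(k:ℤ) by ring, ← hs]
          exact ih k (by omega)
    intro σ
    rcases Int.eq_nat_or_neg σ with ⟨k, rfl | rfl⟩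
    · exact fwd k
    · exact bwd k
  -- rows of the determinant array
  set Rr : ℤ → ℤ → ℝ := fun i u => Dt (u - N + i) (u + N - i) with hRr
  have Rtop : ∀ u : ℤ, Rr (N-1) u = 1 := by
    intro u
    simp only [hRr]
    rw [show u - N + (N-1) = u-1 by ring, show u + N - (N-1) = (u-1)+2 by ring]
    exact ones (u-1)
  have rowT : ∀ σ : ℤ, Dt (σ-2) (σ+2) = t σ := by
    intro σ
    have e : Dt (σ-2) (σ+2) = t σ * Dt (σ-2) σ := by
      simp only [hDt, hV1rel σ, hV2rel σ]; ring
    have e2 : Dt (σ-2) σ = 1 := by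
      have := ones (σ-2); rw [show σ-2+2 = σ by ring] at this; exact this
    rw [e, e2, mul_one]
  have Rsub : ∀ u : ℤ, Rr (N-2) u = t u := by
    intro u
    simp only [hRr]
    rw [show u - N + (N-2) = u-2 by ring, show u + N - (N-2) = u+2 by ring]
    exact rowT u
  have hirota : ∀ (i u : ℤ), Rr i (u-1) * Rr i (u+1) = Rr (i-1) u * Rr (i+1) u + 1 := by
    intro i u
    have hp := pluck (u-1-N+i) (u-1-N+i+2) (u-1+N-i) (u-1+N-i+2)
    rw [ones (u-1-N+i), ones (u-1+N-i), one_mul] at hp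
    simp only [hRr]
    rw [show u-1-N+i+2 = u+1-N+i by ring, show u-1+N-i+2 = u+1+N-i by ring] at hp
    rw [show u - N + (i-1) = u-1-N+i by ring, show u + N - (i-1) = u+1+N-i by ring,
      show u - N + (i+1) = u+1-N+i by ring, show u + N - (i+1) = u-1+N-i by ring]
    -- hp : 1 - Dt (u-1-N+i) (u-1+N-i) * Dt (u+1-N+i) (u+1+N-i)
    --        + Dt (u-1-N+i) (u+1+N-i) * Dt (u+1-N+i) (u-1+N-i) = 0
    rw [show u-1 - N + i = u-1-N+i by ring, show u-1 + N - i = u-1+N-i by ring,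
      show u+1 - N + i = u+1-N+i by ring, show u+1 + N - i = u+1+N-i by ring]
    linarith [hp]
  -- main downward induction: H-identities and positivity of rows
  have key : ∀ k : ℕ,
      (∀ v : ℤ, 2 ≤ N-2-(k:ℤ) →
        1 + (Y (N-2-(k:ℤ)) v)⁻¹ = Rr (N-2-(k:ℤ)) (v-1) * Rr (N-2-(k:ℤ)) (v+1)) ∧
      (∀ v : ℤ, 1 ≤ N-2-(k:ℤ) → 0 < Rr (N-2-(k:ℤ)) v) := by
    intro k
    induction k using Nat.strong_induction_on with
    | _ k ih =>
      match k with
      | 0 =>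
        constructor
        · intro v _
          simp only [Nat.cast_zero, sub_zero]
          rw [Rsub, Rsub]
          exact (trel v).symm
        · intro v _
          simp only [Nat.cast_zero, sub_zero]
          rw [Rsub]
          exact tpos v
      | 1 =>
        have hsub3 : ∀ v : ℤ, Rr (N-3) v = (Y (N-2) v)⁻¹ := by
          intro v
          have hh := hirota (N-2) v
          rw [show N-2-1 = N-3 by ring, show N-2+1 = N-1 by ring, Rtop, mul_one,
            Rsub, Rsub] at hh
          have := trel v
          linear_combination this - hh
        constructor
        · intro v h2le
          simp only [Nat.cast_one] at h2le ⊢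
          rw [show N-2-(1:ℤ) = N-3 by ring] at h2le ⊢
          rw [hsub3 (v-1)]
          rw [hsub3 (v+1)]
          have hn5 : 5 ≤ n := by omega
          have h4v := h4 v hn5
          rw [← mul_inv, h4v, one_div, inv_inv]
        · intro v h1le
          simp only [Nat.cast_one] at h1le ⊢
          rw [show N-2-(1:ℤ) = N-3 by ring] at h1le ⊢
          rw [hsub3 v]
          exact inv_pos.mpr (hpos (N-2) v (by omega) (by omega))
      | (m+2) =>
        have hIH1 := ih (m+1) (by omega)
        have hIH0 := ih m (by omega)
        push_cast at hIH1 hIH0 ⊢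
        set i : ℤ := N - 2 - ((m:ℤ)+2) with hi
        rw [show N - 2 - ((m:ℤ)+1) = i + 1 by rw [hi]; ring] at hIH1
        rw [show N - 2 - (m:ℤ) = i + 2 by rw [hi]; ring] at hIH0
        have hZ : 1 ≤ i → ∀ v : ℤ, Rr i v * Rr (i+2) v = (Y (i+1) v)⁻¹ := by
          intro h1i v
          have hh := hirota (i+1) v
          rw [show i+1-1 = i by ring, show i+1+1 = i+2 by ring] at hh
          have hH1 := hIH1.1 v (by omega)
          linear_combination -hh - hH1
        constructor
        · intro v h2i
          have hh3 := h3 (i+1) v (by omega) (by omega)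
          rw [show i+1-1 = i by ring, show i+1+1 = i+2 by ring] at hh3
          have hE4 : (Y (i+1) (v-1))⁻¹ * (Y (i+1) (v+1))⁻¹ =
              (1 + (Y i v)⁻¹) * (1 + (Y (i+2) v)⁻¹) := by
            rw [← mul_inv, hh3, one_div, inv_inv]
          have hE1 := (hZ (by omega) (v-1)).symm
          have hE2 := (hZ (by omega) (v+1)).symm
          have hE3 := hIH0.1 v (by omega)
          have c1 : Rr (i+2) (v-1) ≠ 0 := ne_of_gt (hIH0.2 (v-1) (by omega))
          have c2 : Rr (i+2) (v+1) ≠ 0 := ne_of_gt (hIH0.2 (v+1) (by omega))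
          have hchain : (1 + (Y i v)⁻¹) * (Rr (i+2) (v-1) * Rr (i+2) (v+1)) =
              (Rr i (v-1) * Rr i (v+1)) * (Rr (i+2) (v-1) * Rr (i+2) (v+1)) := by
            calc (1 + (Y i v)⁻¹) * (Rr (i+2) (v-1) * Rr (i+2) (v+1))
                = (1 + (Y i v)⁻¹) * (1 + (Y (i+2) v)⁻¹) := by rw [← hE3]
              _ = (Y (i+1) (v-1))⁻¹ * (Y (i+1) (v+1))⁻¹ := hE4.symm
              _ = (Rr i (v-1) * Rr (i+2) (v-1)) * (Rr i (v+1) * Rr (i+2) (v+1)) := by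
                  rw [hE1, hE2]
              _ = (Rr i (v-1) * Rr i (v+1)) * (Rr (i+2) (v-1) * Rr (i+2) (v+1)) := by
                  ring
          exact mul_right_cancel₀ (mul_ne_zero c1 c2) hchain
        · intro v h1i
          have hprodpos : 0 < Rr i v * Rr (i+2) v := by
            rw [hZ h1i v]
            exact inv_pos.mpr (hpos (i+1) v (by omega) (by omega))
          have hR2 : 0 < Rr (i+2) v := hIH0.2 v (by omega)
          nlinarith [hprodpos, hR2]
  -- convenient packaging
  have Hrow : ∀ i : ℤ, 2 ≤ i → i ≤ N-2 → ∀ v : ℤ,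
      1 + (Y i v)⁻¹ = Rr i (v-1) * Rr i (v+1) := by
    intro i hi2 hiN v
    have hk := (key (N-2-i).toNat).1 v
    rw [Int.toNat_of_nonneg (by omega)] at hk
    rw [show N-2-(N-2-i) = i by ring] at hk
    exact hk (by omega)
  have Rpos : ∀ i : ℤ, 1 ≤ i → i ≤ N-1 → ∀ v : ℤ, 0 < Rr i v := by
    intro i hi1 hiN v
    rcases eq_or_lt_of_le hiN with heq | hlt
    · rw [heq, Rtop]; exact one_pos
    · have hk := (key (N-2-i).toNat).2 v
      rw [Int.toNat_of_nonneg (by omega)] at hk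
      rw [show N-2-(N-2-i) = i by ring] at hk
      exact hk (by omega)
  have Zinv : ∀ i : ℤ, 2 ≤ i → i ≤ N-2 → ∀ v : ℤ,
      (Y i v)⁻¹ = Rr (i-1) v * Rr (i+1) v := by
    intro i hi2 hiN v
    have hh := hirota i v
    have hH := Hrow i hi2 hiN v
    linear_combination hh + hH
  have oneY1 : ∀ v : ℤ, (1 + Y 1 v) * (Rr 1 (v-1) * Rr 1 (v+1)) = 1 := by
    have hY2 : ∀ v : ℤ, Y 2 v = (Rr 1 v * Rr 3 v)⁻¹ := by
      intro v
      have hz := Zinv 2 le_rfl (by omega) v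
      rw [show (2:ℤ)-1 = 1 by norm_num, show (2:ℤ)+1 = 3 by norm_num] at hz
      rw [← hz, inv_inv]
    intro v
    have p1 : 0 < Rr 1 (v-1) := Rpos 1 le_rfl (by omega) _
    have p2 : 0 < Rr 1 (v+1) := Rpos 1 le_rfl (by omega) _
    by_cases hn4 : n = 4
    · have hh := h2 v
      rw [if_pos hn4] at hh
      have h3top : ∀ w : ℤ, Rr 3 w = 1 := by
        intro w
        have := Rtop w
        rw [show N-1 = (3:ℤ) by omega] at this
        exact this
      rw [hY2 (v-1), hY2 (v+1), h3top, h3top, mul_one, mul_one] at hh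
      rw [← hh]
      field_simp
    · have hn5 : 5 ≤ n := by omega
      have hh := h2 v
      rw [if_neg hn4] at hh
      have hH3 := Hrow 3 (by norm_num) (by omega) v
      rw [hY2 (v-1), hY2 (v+1), hH3] at hh
      have p3 : 0 < Rr 3 (v-1) := Rpos 3 (by norm_num) (by omega) _
      have p4 : 0 < Rr 3 (v+1) := Rpos 3 (by norm_num) (by omega) _
      have h34 : Rr 3 (v-1) * Rr 3 (v+1) ≠ 0 := by positivity
      rw [eq_div_iff h34] at hh
      rw [← hh]
      have e1 : Rr 1 (v-1) ≠ 0 := ne_of_gt p1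
      have e2 : Rr 1 (v+1) ≠ 0 := ne_of_gt p2
      have e3 : Rr 3 (v-1) ≠ 0 := ne_of_gt p3
      have e4 : Rr 3 (v+1) ≠ 0 := ne_of_gt p4
      field_simp
  have productY1 : ∀ v : ℤ, Y 1 v * (Rr 1 (v-1) * Rr 1 (v+1)) = -(Rr 0 v * Rr 2 v) := by
    intro v
    have hh := hirota 1 v
    rw [show (1:ℤ)-1 = 0 by norm_num, show (1:ℤ)+1 = 2 by norm_num] at hh
    linear_combination oneY1 v - hh
  have oneplusY : ∀ j : ℤ, 2 ≤ j → j ≤ N-2 → ∀ v : ℤ,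
      1 + Y j v = (Rr j (v-1) * Rr j (v+1)) / (Rr (j-1) v * Rr (j+1) v) := by
    intro j hj1 hj2 v
    have hY : 0 < Y j v := hpos j v (by omega) hj2
    have hZ := Zinv j hj1 hj2 v
    have hH := Hrow j hj1 hj2 v
    rw [← hH, ← hZ]
    rw [eq_div_iff (inv_ne_zero (ne_of_gt hY))]
    field_simp
    ring
  -- the key consequence of the long-range relation h1
  have star : ∀ w : ℤ, Rr 0 (w-N+1) * Rr 0 (w+N-1) = Rr 1 (w-N) * Rr 1 (w+N) := by
    intro w
    have hh := h1 w
    set F : ℤ → ℝ := fun j => Rr j (w-N+j-1) with hF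
    set G : ℤ → ℝ := fun j => Rr j (w-N+j+1) with hG
    set C : ℤ → ℝ := fun j => Rr j (w+N-j-1) with hC
    set D : ℤ → ℝ := fun j => Rr j (w+N-j+1) with hD
    have hcong : ∀ j ∈ Finset.Icc (2:ℤ) (N-2),
        (1 + Y j (w-N+j)) * (1 + Y j (w+N-j)) =
        ((F j / F (j+1)) * (G j / G (j-1))) * ((C j / C (j-1)) * (D j / D (j+1))) := by
      intro j hj
      rw [Finset.mem_Icc] at hj
      rw [oneplusY j hj.1 hj.2 (w-N+j), oneplusY j hj.1 hj.2 (w+N-j)]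
      simp only [hF, hG, hC, hD]
      rw [show w-N+(j+1)-1 = w-N+j by ring, show w-N+(j-1)+1 = w-N+j by ring,
        show w+N-(j-1)-1 = w+N-j by ring, show w+N-(j+1)+1 = w+N-j by ring]
      exact div4_rearrange _ _ _ _ _ _ _ _
    rw [Finset.prod_congr rfl hcong, Finset.prod_mul_distrib,
      Finset.prod_mul_distrib, Finset.prod_mul_distrib] at hh
    rw [tel_up F 2 (N-2) (by omega)
        (fun j hj1 hj2 => ne_of_gt (by
          simp only [hF]
          exact Rpos j (by omega) (by omega) _)),
      tel_down G 2 (N-2) (by omega)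
        (fun j hj1 hj2 => ne_of_gt (by
          simp only [hG]
          exact Rpos j (by omega) (by omega) _)),
      tel_down C 2 (N-2) (by omega)
        (fun j hj1 hj2 => ne_of_gt (by
          simp only [hC]
          exact Rpos j (by omega) (by omega) _)),
      tel_up D 2 (N-2) (by omega)
        (fun j hj1 hj2 => ne_of_gt (by
          simp only [hD]
          exact Rpos j (by omega) (by omega) _))] at hh
    simp only [hF, hG, hC, hD] at hh
    rw [show N-2+1 = N-1 by ring, show (2:ℤ)-1 = 1 by norm_num] at hh
    rw [show w-N+(N-1)-1 = w-2 by ring, show w-N+2-1 = w-N+1 by ring,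
      show w-N+(N-2)+1 = w-1 by ring, show w-N+1+1 = w-N+2 by ring,
      show w+N-(N-2)-1 = w+1 by ring, show w+N-1-1 = w+N-2 by ring,
      show w+N-2+1 = w+N-1 by ring, show w+N-(N-1)+1 = w+2 by ring] at hh
    rw [Rtop, Rtop, div_one, div_one] at hh
    rw [Hrow (N-2) (by omega) le_rfl w] at hh
    rw [show w - (N-1) = w-N+1 by ring, show w + (N-1) = w+N-1 by ring] at hh
    have hA := productY1 (w-N+1)
    rw [show w-N+1-1 = w-N by ring, show w-N+1+1 = w-N+2 by ring] at hA
    have hB := productY1 (w+N-1)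
    rw [show w+N-1-1 = w+N-2 by ring, show w+N-1+1 = w+N by ring] at hB
    have pl2 : 0 < Rr 1 (w-N+2) := Rpos 1 le_rfl (by omega) _
    have pl3 : 0 < Rr 1 (w+N-2) := Rpos 1 le_rfl (by omega) _
    have pe1 : 0 < Rr (N-2) (w-1) := Rpos (N-2) (by omega) (by omega) _
    have pe2 : 0 < Rr (N-2) (w+1) := Rpos (N-2) (by omega) (by omega) _
    have pa2 : 0 < Rr 2 (w-N+1) := Rpos 2 (by omega) (by omega) _
    have pb2 : 0 < Rr 2 (w+N-1) := Rpos 2 (by omega) (by omega) _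
    have nl2 := ne_of_gt pl2
    have nl3 := ne_of_gt pl3
    have ne1 := ne_of_gt pe1
    have ne2 := ne_of_gt pe2
    have hh2 : Y 1 (w-N+1) * Y 1 (w+N-1) * (Rr 1 (w-N+2) * Rr 1 (w+N-2)) =
        Rr 2 (w-N+1) * Rr 2 (w+N-1) := by
      field_simp at hh
      linear_combination hh
    have hAB : (Y 1 (w-N+1) * (Rr 1 (w-N) * Rr 1 (w-N+2))) *
        (Y 1 (w+N-1) * (Rr 1 (w+N-2) * Rr 1 (w+N))) =
        (Rr 0 (w-N+1) * Rr 2 (w-N+1)) * (Rr 0 (w+N-1) * Rr 2 (w+N-1)) := by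
      rw [hA, hB]; ring
    have main : (Rr 0 (w-N+1) * Rr 0 (w+N-1)) * (Rr 2 (w-N+1) * Rr 2 (w+N-1)) =
        (Rr 1 (w-N) * Rr 1 (w+N)) * (Rr 2 (w-N+1) * Rr 2 (w+N-1)) := by
      linear_combination (Rr 1 (w-N) * Rr 1 (w+N)) * hh2 - hAB
    exact mul_right_cancel₀ (by positivity) main
  -- the vanishing diagonal: Dt σ (σ + (4N-2)) = 0
  have vanish : ∀ σ : ℤ, Dt σ (σ + (4*N-2)) = 0 := by
    intro σ
    have hst := star (σ + 2*N - 1)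
    simp only [hRr] at hst
    rw [show σ+2*N-1-N+1-N+0 = σ by ring, show σ+2*N-1-N+1+N-0 = σ+2*N by ring,
      show σ+2*N-1+N-1-N+0 = σ+2*N-2 by ring, show σ+2*N-1+N-1+N-0 = σ+4*N-2 by ring,
      show σ+2*N-1-N-N+1 = σ by ring, show σ+2*N-1-N+N-1 = σ+2*N-2 by ring,
      show σ+2*N-1+N-N+1 = σ+2*N by ring, show σ+2*N-1+N+N-1 = σ+4*N-2 by ring] at hst
    have hp := pluck σ (σ+2*N-2) (σ+2*N) (σ+4*N-2)
    have ho : Dt (σ+2*N-2) (σ+2*N) = 1 := by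
      have := ones (σ+2*N-2)
      rw [show σ+2*N-2+2 = σ+2*N by ring] at this
      exact this
    rw [ho, mul_one] at hp
    rw [show σ + (4*N-2) = σ+4*N-2 by ring]
    linarith [hst, hp]
  -- glide factors
  have exmu : ∀ σ : ℤ, ∃ c : ℝ,
      V1 (σ + (4*N-2)) = c * V1 σ ∧ V2 (σ + (4*N-2)) = c * V2 σ := by
    intro σ
    have hv := vanish σ
    simp only [hDt] at hv
    have hnz : V1 σ ≠ 0 ∨ V2 σ ≠ 0 := by
      by_contra hcon
      push_neg at hcon
      have h1' := ones σ
      simp only [hDt, hcon.1, hcon.2] at h1'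
      norm_num at h1'
    rcases hnz with hv1 | hv2
    · refine ⟨V1 (σ + (4*N-2)) / V1 σ, by field_simp, ?_⟩
      field_simp
      linear_combination hv
    · refine ⟨V2 (σ + (4*N-2)) / V2 σ, ?_, by field_simp⟩
      field_simp
      linear_combination -hv
  choose μ hμ1 hμ2 using exmu
  have Dtper : ∀ σ τ : ℤ, Dt (σ + (4*N-2)) (τ + (4*N-2)) = μ σ * μ τ * Dt σ τ := by
    intro σ τ
    simp only [hDt, hμ1, hμ2]
    ring
  have μpair : ∀ σ : ℤ, μ σ * μ (σ+2) = 1 := by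
    intro σ
    have h := Dtper σ (σ+2)
    rw [ones σ, mul_one] at h
    have h2' : Dt (σ + (4*N-2)) ((σ + (4*N-2)) + 2) = 1 := ones _
    rw [show σ+2 + (4*N-2) = (σ + (4*N-2)) + 2 by ring] at h
    rw [h2'] at h
    exact h.symm
  have Rper : ∀ i u : ℤ, Rr i (u + (4*N-2)) = (μ (u-N+i) * μ (u+N-i)) * Rr i u := by
    intro i u
    simp only [hRr]
    rw [show u + (4*N-2) - N + i = (u-N+i) + (4*N-2) by ring,
      show u + (4*N-2) + N - i = (u+N-i) + (4*N-2) by ring]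
    exact Dtper _ _
  -- conclusion
  intro i u hi1 hi2
  rcases eq_or_lt_of_le hi1 with heq | hlt
  · -- i = 1
    rw [← heq]
    have e1 := oneY1 u
    have e2 := oneY1 (u + (4*N-2))
    rw [show u + (4*N-2) - 1 = (u-1) + (4*N-2) by ring,
      show u + (4*N-2) + 1 = (u+1) + (4*N-2) by ring, Rper, Rper] at e2
    rw [show u-1-N+1 = u-N by ring, show u-1+N-1 = u+N-2 by ring,
      show u+1-N+1 = u-N+2 by ring, show u+1+N-1 = u+N by ring] at e2
    have hmu1 : μ (u-N) * μ (u-N+2) = 1 := by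
      have := μpair (u-N); rw [show u-N+2 = u-N+2 by ring] at this; exact this
    have hmu2 : μ (u+N-2) * μ (u+N) = 1 := by
      have := μpair (u+N-2); rw [show u+N-2+2 = u+N by ring] at this; exact this
    have p1 : 0 < Rr 1 (u-1) := Rpos 1 le_rfl (by omega) _
    have p2 : 0 < Rr 1 (u+1) := Rpos 1 le_rfl (by omega) _
    have e2' : (1 + Y 1 (u + (4*N-2))) * (Rr 1 (u-1) * Rr 1 (u+1)) = 1 := by
      linear_combination e2 -
        ((1 + Y 1 (u + (4*N-2))) * Rr 1 (u-1) * Rr 1 (u+1) * (μ (u+N-2) * μ (u+N))) * hmu1 -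
        ((1 + Y 1 (u + (4*N-2))) * Rr 1 (u-1) * Rr 1 (u+1)) * hmu2
    have hc : 1 + Y 1 (u + (4*N-2)) = 1 + Y 1 u :=
      mul_right_cancel₀ (by positivity) (e2'.trans e1.symm)
    exact add_left_cancel hc
  · -- 2 ≤ i
    have hi2' : 2 ≤ i := hlt
    have z1 := Zinv i hi2' hi2 u
    have z2 := Zinv i hi2' hi2 (u + (4*N-2))
    rw [Rper, Rper] at z2
    have hmu1 : μ (u-N+(i-1)) * μ (u-N+(i+1)) = 1 := by
      have := μpair (u-N+(i-1))
      rw [show u-N+(i-1)+2 = u-N+(i+1) by ring] at this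
      exact this
    have hmu2 : μ (u+N-(i+1)) * μ (u+N-(i-1)) = 1 := by
      have := μpair (u+N-(i+1))
      rw [show u+N-(i+1)+2 = u+N-(i-1) by ring] at this
      exact this
    have hinv : (Y i (u + (4*N-2)))⁻¹ = (Y i u)⁻¹ := by
      rw [z2, z1]
      linear_combination (Rr (i-1) u * Rr (i+1) u * (μ (u+N-(i+1)) * μ (u+N-(i-1)))) * hmu1 +
        (Rr (i-1) u * Rr (i+1) u) * hmu2
    exact inv_injective hinv
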